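/- There exist positive constants c_7, c_8 and a constant c_9, not depending on θ, such that for all θ ∈ Θ_G satisfying P(A_ε(θ)) ≥ π_max + ε_7 (where A_ε(θ) is the set of points at distance ≥ ε from all component means), the population pseudo-log-likelihood satisfies L(θ) ≤ -c_7/λ_min(θ) - c_8 log λ_min(θ) + c_9; consequently L(θ) → -∞ as λ_min(θ) ↘ 0 along such θ. -/

import Mathlib

open Real Matrix Filter Topology MeasureTheory

/-- smallest eigenvalue (infimum of the spectrum) of a real matrix -/
noncomputable def lamMin {p : ℕ} (A : Matrix (Fin p) (Fin p) ℝ) : ℝ := sInf (spectrum ℝ A)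

/-- largest eigenvalue (supremum of the spectrum) of a real matrix -/
noncomputable def lamMax {p : ℕ} (A : Matrix (Fin p) (Fin p) ℝ) : ℝ := sSup (spectrum ℝ A)

/-- The `p`-dimensional Gaussian density with mean `μ` and covariance matrix `S`. -/
noncomputable def gauss {p : ℕ} (x μ : Fin p → ℝ) (S : Matrix (Fin p) (Fin p) ℝ) : ℝ :=
  (2 * π) ^ (-(p : ℝ) / 2) * S.det ^ (-(1 : ℝ) / 2) *
    Real.exp (-((x - μ) ⬝ᵥ (S⁻¹ *ᵥ (x - μ))) / 2)

/-- parameter vector θ = (π₀, (π_j), (μ_j), (Σ_j)) of a Gaussian mixture with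
improper uniform (noise) component -/
abbrev Param (p G : ℕ) :=
  ℝ × (Fin G → ℝ) × (Fin G → (Fin p → ℝ)) × (Fin G → Matrix (Fin p) (Fin p) ℝ)

/-- noise proportion π₀ -/
def pi0 {p G : ℕ} (θ : Param p G) : ℝ := θ.1

/-- mixture proportions π_j -/
def wt {p G : ℕ} (θ : Param p G) : Fin G → ℝ := θ.2.1

/-- component means μ_j -/
def mean {p G : ℕ} (θ : Param p G) : Fin G → Fin p → ℝ := θ.2.2.1

/-- component covariance matrices Σ_j -/
def covm {p G : ℕ} (θ : Param p G) : Fin G → Matrix (Fin p) (Fin p) ℝ := θ.2.2.2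

/-- the improper pseudo-density ψ_δ(x, θ) = π₀δ + Σ_j π_j φ(x; μ_j, Σ_j) -/
noncomputable def psi {p G : ℕ} (δ : ℝ) (θ : Param p G) (x : Fin p → ℝ) : ℝ :=
  pi0 θ * δ + ∑ j, wt θ j * gauss x (mean θ j) (covm θ j)

/-- λ_min(θ): smallest eigenvalue among all component covariances -/
noncomputable def lamMinP {p G : ℕ} (θ : Param p G) : ℝ := ⨅ j, lamMin (covm θ j)

/-- λ_max(θ): largest eigenvalue among all component covariances -/
noncomputable def lamMaxP {p G : ℕ} (θ : Param p G) : ℝ := ⨆ j, lamMax (covm θ j)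

/-- basic parameter constraints: proportions nonnegative summing to one,
positive definite covariances, eigenratio λ_max(θ)/λ_min(θ) ≤ γ -/
def baseOK {p G : ℕ} (γ : ℝ) (θ : Param p G) : Prop :=
  0 ≤ pi0 θ ∧ (∀ j, 0 ≤ wt θ j) ∧ pi0 θ + ∑ j, wt θ j = 1 ∧
    (∀ j, (covm θ j).PosDef) ∧ lamMaxP θ ≤ γ * lamMinP θ

/-- the finite-sample constrained parameter space Θ (eigenratio bound and
estimated noise proportion (1/n) Σ_i τ₀(x_i, θ) ≤ π_max) -/
def ThetaN {p G n : ℕ} (δ γ πmax : ℝ) (x : Fin n → Fin p → ℝ) : Set (Param p G) :=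
  {θ | baseOK γ θ ∧ (1 / n : ℝ) * ∑ i, pi0 θ * δ / psi δ θ (x i) ≤ πmax}

/-- the improper pseudo-log-likelihood l_n(θ) = (1/n) Σ_i log ψ_δ(x_i, θ) -/
noncomputable def ln {p G n : ℕ} (δ : ℝ) (x : Fin n → Fin p → ℝ) (θ : Param p G) : ℝ :=
  (1 / n : ℝ) * ∑ i, Real.log (psi δ θ (x i))

/-- the population constrained parameter space Θ_G (noise constraint
E_P[π₀δ/ψ_δ(x,θ)] ≤ π_max, eigenratio constraint, and well-definedness of L) -/
def ThetaG {p : ℕ} (G : ℕ) (P : Measure (Fin p → ℝ)) (δ γ πmax : ℝ) : Set (Param p G) :=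
  {θ | baseOK γ θ ∧ Integrable (fun x => Real.log (psi δ θ x)) P ∧
    ∫ x, pi0 θ * δ / psi δ θ x ∂P ≤ πmax}

/-- the population pseudo-log-likelihood L(θ) = E_P[log ψ_δ(x, θ)] -/
noncomputable def LL {p G : ℕ} (P : Measure (Fin p → ℝ)) (δ : ℝ) (θ : Param p G) : ℝ :=
  ∫ x, Real.log (psi δ θ x) ∂P

/-- assumption A1: P puts mass < 1 - π_max on every set of G points -/
def A1 {p : ℕ} (P : Measure (Fin p → ℝ)) (πmax : ℝ) (G : ℕ) : Prop :=
  ∀ y : Fin G → Fin p → ℝ, P (Set.range y) < ENNReal.ofReal (1 - πmax)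

section AuxMatrix

variable {p : ℕ}

lemma spec_nonempty (hp : 0 < p) {S : Matrix (Fin p) (Fin p) ℝ} (hS : S.IsHermitian) :
    (spectrum ℝ S).Nonempty := by
  rw [hS.spectrum_real_eq_range_eigenvalues]
  have : Nonempty (Fin p) := Fin.pos_iff_nonempty.mp hp
  exact Set.range_nonempty _

lemma lamMin_le {S : Matrix (Fin p) (Fin p) ℝ}
    {t : ℝ} (ht : t ∈ spectrum ℝ S) : lamMin S ≤ t :=
  csInf_le (finite_real_spectrum (A:=S)).bddBelow ht

lemma le_lamMax {S : Matrix (Fin p) (Fin p) ℝ}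
    {t : ℝ} (ht : t ∈ spectrum ℝ S) : t ≤ lamMax S :=
  le_csSup (finite_real_spectrum (A:=S)).bddAbove ht

lemma spec_pos {S : Matrix (Fin p) (Fin p) ℝ} (hS : S.PosDef)
    {t : ℝ} (ht : t ∈ spectrum ℝ S) : 0 < t := by
  rw [hS.1.spectrum_real_eq_range_eigenvalues] at ht
  obtain ⟨i, rfl⟩ := ht
  exact hS.eigenvalues_pos i

lemma lamMin_pos (hp : 0 < p) {S : Matrix (Fin p) (Fin p) ℝ} (hS : S.PosDef) :
    0 < lamMin S := by
  obtain ⟨t, ht⟩ := spec_nonempty hp hS.1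
  have : sInf (spectrum ℝ S) ∈ spectrum ℝ S :=
    Set.Nonempty.csInf_mem ⟨t, ht⟩ (finite_real_spectrum (A:=S))
  exact spec_pos hS this

lemma lamMin_le_lamMax (hp : 0 < p) {S : Matrix (Fin p) (Fin p) ℝ} (hS : S.PosDef) :
    lamMin S ≤ lamMax S := by
  obtain ⟨t, ht⟩ := spec_nonempty hp hS.1
  exact (lamMin_le ht).trans (le_lamMax ht)

lemma pow_lamMin_le_det (hp : 0 < p) {S : Matrix (Fin p) (Fin p) ℝ} (hS : S.PosDef) :
    lamMin S ^ p ≤ S.det := by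
  have hdet : S.det = ∏ i, hS.1.eigenvalues i := by
    simpa using hS.1.det_eq_prod_eigenvalues
  rw [hdet]
  calc lamMin S ^ p = ∏ _i : Fin p, lamMin S := by
        rw [Finset.prod_const, Finset.card_univ, Fintype.card_fin]
    _ ≤ ∏ i, hS.1.eigenvalues i := by
        refine Finset.prod_le_prod (fun i _ => (lamMin_pos hp hS).le) (fun i _ => ?_)
        exact lamMin_le (hS.1.eigenvalues_mem_spectrum_real i)

lemma spec_shift {S : Matrix (Fin p) (Fin p) ℝ} (c t : ℝ)
    (ht : t ∈ spectrum ℝ (S - c • (1 : Matrix (Fin p) (Fin p) ℝ))) : t + c ∈ spectrum ℝ S := by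
  have h : S - c • (1 : Matrix (Fin p) (Fin p) ℝ)
      = algebraMap ℝ (Matrix (Fin p) (Fin p) ℝ) (-c) + S := by
    rw [Algebra.algebraMap_eq_smul_one, neg_smul]; abel
  rw [h] at ht
  have h2 : t = (t + c) + (-c) := by ring
  rw [h2] at ht
  exact (spectrum.add_mem_add_iff).mp ht

lemma rayleigh_inv (hp : 0 < p) {S : Matrix (Fin p) (Fin p) ℝ} (hS : S.PosDef) (v : Fin p → ℝ) :
    (lamMax S)⁻¹ * (v ⬝ᵥ v) ≤ v ⬝ᵥ (S⁻¹ *ᵥ v) := by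
  set c := (lamMax S)⁻¹ with hc
  have hSinv : (S⁻¹).PosDef := hS.inv
  have hlmax : 0 < lamMax S := lt_of_lt_of_le (lamMin_pos hp hS) (lamMin_le_lamMax hp hS)
  have hU : IsUnit S := (Matrix.isUnit_iff_isUnit_det S).mpr (isUnit_iff_ne_zero.mpr hS.det_pos.ne')
  have hone : (c • (1 : Matrix (Fin p) (Fin p) ℝ)).IsHermitian := by
    simp [Matrix.IsHermitian, Matrix.conjTranspose_smul]
  have hBH : (S⁻¹ - c • (1 : Matrix (Fin p) (Fin p) ℝ)).IsHermitian := hSinv.1.sub hone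
  have heig : ∀ i, 0 ≤ hBH.eigenvalues i := by
    intro i
    have ht : hBH.eigenvalues i ∈ spectrum ℝ (S⁻¹ - c • (1 : Matrix (Fin p) (Fin p) ℝ)) :=
      hBH.eigenvalues_mem_spectrum_real i
    have hu : hBH.eigenvalues i + c ∈ spectrum ℝ S⁻¹ := spec_shift c _ ht
    set u := hBH.eigenvalues i + c with hu'
    have hupos : 0 < u := spec_pos hSinv hu
    have hmem : u⁻¹ ∈ spectrum ℝ S := by
      have h1 : ((u⁻¹)⁻¹ : ℝ) ∈ spectrum ℝ
          ((hU.unit⁻¹ : (Matrix (Fin p) (Fin p) ℝ)ˣ) : Matrix (Fin p) (Fin p) ℝ) := by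
        rw [inv_inv, Matrix.coe_units_inv, hU.unit_spec]; exact hu
      have := (spectrum.inv₀_mem_inv_iff (a := hU.unit) (r := u⁻¹)).mp h1
      rwa [hU.unit_spec] at this
    have h3 : u⁻¹ ≤ lamMax S := le_lamMax hmem
    have h4 : c ≤ u := by
      rw [hc]
      calc (lamMax S)⁻¹ ≤ (u⁻¹)⁻¹ := inv_anti₀ (inv_pos.mpr hupos) h3
        _ = u := inv_inv u
    rw [hu'] at h4; linarith
  have hB : (S⁻¹ - c • (1 : Matrix (Fin p) (Fin p) ℝ)).PosSemidef :=
    hBH.posSemidef_iff_eigenvalues_nonneg.mpr heig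
  have h0 := hB.dotProduct_mulVec_nonneg v
  rw [star_trivial] at h0
  simp only [sub_mulVec, smul_mulVec, one_mulVec, dotProduct_sub, dotProduct_smul,
    smul_eq_mul] at h0
  linarith

lemma dot_self_nonneg (v : Fin p → ℝ) : 0 ≤ v ⬝ᵥ v :=
  Finset.sum_nonneg fun i _ => mul_self_nonneg (v i)

lemma quad_nonneg (hp : 0 < p) {S : Matrix (Fin p) (Fin p) ℝ} (hS : S.PosDef) (v : Fin p → ℝ) :
    0 ≤ v ⬝ᵥ (S⁻¹ *ᵥ v) := by
  have h := rayleigh_inv hp hS v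
  have hlmax : 0 < lamMax S := lt_of_lt_of_le (lamMin_pos hp hS) (lamMin_le_lamMax hp hS)
  nlinarith [dot_self_nonneg v, inv_pos.mpr hlmax]

lemma gauss_pos {S : Matrix (Fin p) (Fin p) ℝ} (hS : S.PosDef) (x μ : Fin p → ℝ) :
    0 < gauss x μ S :=
  mul_pos (mul_pos (Real.rpow_pos_of_pos Real.two_pi_pos _)
    (Real.rpow_pos_of_pos hS.det_pos _)) (Real.exp_pos _)

lemma gauss_le (hp : 0 < p) {S : Matrix (Fin p) (Fin p) ℝ} (hS : S.PosDef)
    {lam : ℝ} (hlam : 0 < lam) (hmin : lam ≤ lamMin S) (x μ : Fin p → ℝ)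
    {q : ℝ} (hq : q ≤ (x - μ) ⬝ᵥ (S⁻¹ *ᵥ (x - μ))) :
    gauss x μ S ≤ (2 * π) ^ (-(p : ℝ) / 2) * lam ^ (-(p : ℝ) / 2) * Real.exp (-q / 2) := by
  have hdet : lam ^ p ≤ S.det :=
    le_trans (pow_le_pow_left₀ hlam.le hmin p) (pow_lamMin_le_det hp hS)
  have h2 : S.det ^ (-(1:ℝ)/2) ≤ ((lam ^ p : ℝ)) ^ (-(1:ℝ)/2) :=
    Real.rpow_le_rpow_of_nonpos (pow_pos hlam p) hdet (by norm_num)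
  have h3 : ((lam ^ p : ℝ)) ^ (-(1:ℝ)/2) = lam ^ (-(p:ℝ)/2) := by
    rw [← Real.rpow_natCast lam p, ← Real.rpow_mul hlam.le]
    congr 1; ring
  have h4 : Real.exp (-((x - μ) ⬝ᵥ (S⁻¹ *ᵥ (x - μ))) / 2) ≤ Real.exp (-q / 2) :=
    Real.exp_le_exp.mpr (by linarith)
  have hC : (0:ℝ) < (2 * π) ^ (-(p : ℝ) / 2) := Real.rpow_pos_of_pos Real.two_pi_pos _
  unfold gauss
  calc (2 * π) ^ (-(p : ℝ) / 2) * S.det ^ (-(1:ℝ)/2) * Real.exp (-((x - μ) ⬝ᵥ (S⁻¹ *ᵥ (x - μ))) / 2)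
      ≤ (2 * π) ^ (-(p : ℝ) / 2) * (lam ^ (-(p:ℝ)/2)) * Real.exp (-q / 2) := by
        apply mul_le_mul
        · rw [← h3]; exact mul_le_mul_of_nonneg_left h2 hC.le
        · exact h4
        · exact (Real.exp_pos _).le
        · positivity
  _ = _ := rfl

end AuxMatrix

set_option maxHeartbeats 1000000

/-- quantitative bound in the proof of Lemma 4: there are constants
c₇, c₈ > 0 and c₉, not depending on θ, such that for all θ ∈ Θ_G with
P(A_ε(θ)) ≥ π_max + ε₇ one has L(θ) ≤ -c₇/λ_min(θ) - c₈ log λ_min(θ) + c₉;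
consequently L(θ_m) → -∞ whenever λ_min(θ_m) ↘ 0 along such θ. -/
theorem stmt16 {p G : ℕ} (hp : 0 < p) (hG : 0 < G)
    (P : Measure (Fin p → ℝ)) [IsProbabilityMeasure P]
    (δ γ πmax ε ε7 : ℝ) (hδ : 0 < δ) (hγ : 1 ≤ γ) (hπ0 : 0 < πmax) (hπ1 : πmax < 1)
    (hε : 0 < ε) (hε7 : 0 < ε7) :
    ∃ c7 > (0 : ℝ), ∃ c8 > (0 : ℝ), ∃ c9 : ℝ,
      (∀ θ ∈ ThetaG G P δ γ πmax,
        ENNReal.ofReal (πmax + ε7) ≤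
            P {x | ∀ j, ε ≤ Real.sqrt (∑ i, (x i - mean θ j i) ^ 2)} →
          LL P δ θ ≤ -c7 / lamMinP θ - c8 * Real.log (lamMinP θ) + c9) ∧
      (∀ θseq : ℕ → Param p G,
        (∀ m, θseq m ∈ ThetaG G P δ γ πmax ∧
          ENNReal.ofReal (πmax + ε7) ≤
            P {x | ∀ j, ε ≤ Real.sqrt (∑ i, (x i - mean (θseq m) j i) ^ 2)}) →
        Tendsto (fun m => lamMinP (θseq m)) atTop (nhds 0) →
        Tendsto (fun m => LL P δ (θseq m)) atTop atBot) := by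
  have hγ0 : (0:ℝ) < γ := lt_of_lt_of_le one_pos hγ
  have hπε : (0:ℝ) < πmax + ε7 := by linarith
  have hCp_pos : (0:ℝ) < (2*π) ^ (-(p:ℝ)/2) := Real.rpow_pos_of_pos Real.two_pi_pos _
  have hK_pos : (0:ℝ) < 1 + πmax / ε7 := by positivity
  have hGne : Nonempty (Fin G) := Fin.pos_iff_nonempty.mp hG
  have hc7 : (0:ℝ) < (πmax + ε7) * ε^2 / (2*γ) := by positivity
  have hc8 : (0:ℝ) < (p:ℝ)/2 := by
    have : (0:ℝ) < (p:ℝ) := Nat.cast_pos.mpr hp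
    linarith
  have hlamP_pos : ∀ θ : Param p G, (∀ j, (covm θ j).PosDef) → 0 < lamMinP θ := by
    intro θ hpos
    obtain ⟨j0, hj0⟩ := Finite.exists_min (fun j => lamMin (covm θ j))
    unfold lamMinP
    exact lt_of_lt_of_le (lamMin_pos hp (hpos j0)) (le_ciInf hj0)
  have key : ∀ θ ∈ ThetaG G P δ γ πmax,
      ENNReal.ofReal (πmax + ε7) ≤
          P {x | ∀ j, ε ≤ Real.sqrt (∑ i, (x i - mean θ j i) ^ 2)} →
        LL P δ θ ≤ -((πmax + ε7) * ε^2 / (2*γ)) / lamMinP θ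
          - (p:ℝ)/2 * Real.log (lamMinP θ)
          + (Real.log (1 + πmax / ε7) + Real.log ((2*π) ^ (-(p:ℝ)/2))) := by
    intro θ hθ hPA
    obtain ⟨⟨hpi0, hwt, hsum, hposd, hratio⟩, hint, hnoise⟩ := hθ
    have hlam_pos : 0 < lamMinP θ := hlamP_pos θ hposd
    have hlam_le : ∀ j, lamMinP θ ≤ lamMin (covm θ j) := by
      intro j; unfold lamMinP
      exact ciInf_le (Set.Finite.bddBelow (Set.finite_range _)) j
    have hgl : ∀ j, lamMax (covm θ j) ≤ γ * lamMinP θ := by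
      intro j
      refine le_trans ?_ hratio
      unfold lamMaxP
      exact le_ciSup (f := fun j => lamMax (covm θ j)) (Set.Finite.bddAbove (Set.finite_range _)) j
    have hgl_pos : 0 < γ * lamMinP θ := mul_pos hγ0 hlam_pos
    set lam := lamMinP θ with hlamdef
    set Cp : ℝ := (2*π) ^ (-(p:ℝ)/2) with hCpdef
    set D : ℝ := Cp * lam ^ (-(p:ℝ)/2) with hDdef
    set e : ℝ := -(ε^2 / (γ * lam)) / 2 with hedef
    set B : ℝ := D * Real.exp e with hBdef
    have hD_pos : 0 < D := mul_pos hCp_pos (Real.rpow_pos_of_pos hlam_pos _)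
    have hB_pos : 0 < B := mul_pos hD_pos (Real.exp_pos _)
    have he_neg : e < 0 := by
      rw [hedef]
      have : 0 < ε^2 / (γ * lam) := div_pos (pow_pos hε 2) hgl_pos
      linarith
    have hB_le_D : B ≤ D := by
      rw [hBdef]
      nlinarith [Real.exp_le_one_iff.mpr he_neg.le, hD_pos]
    -- set A
    set A := {x : Fin p → ℝ | ∀ j, ε ≤ Real.sqrt (∑ i, (x i - mean θ j i) ^ 2)} with hAdef
    -- gauss bounds
    have hgauss_all : ∀ (x : Fin p → ℝ) j, gauss x (mean θ j) (covm θ j) ≤ D := by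
      intro x j
      have h := gauss_le hp (hposd j) hlam_pos (hlam_le j) x (mean θ j)
        (quad_nonneg hp (hposd j) _)
      simpa using h
    have hgauss_A : ∀ x ∈ A, ∀ j, gauss x (mean θ j) (covm θ j) ≤ B := by
      intro x hx j
      have hv : ε^2 ≤ (x - mean θ j) ⬝ᵥ (x - mean θ j) := by
        have h1 : ε ≤ Real.sqrt (∑ i, (x i - mean θ j i) ^ 2) := hx j
        have h2 : ε^2 ≤ ∑ i, (x i - mean θ j i) ^ 2 := by
          have hs : 0 ≤ ∑ i, (x i - mean θ j i) ^ 2 :=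
            Finset.sum_nonneg fun i _ => sq_nonneg _
          nlinarith [Real.sq_sqrt hs, Real.sqrt_nonneg (∑ i, (x i - mean θ j i) ^ 2)]
        simpa [dotProduct, Pi.sub_apply, pow_two] using h2
      have hlmax_pos : 0 < lamMax (covm θ j) :=
        lt_of_lt_of_le (lamMin_pos hp (hposd j)) (lamMin_le_lamMax hp (hposd j))
      have hq : ε^2 / (γ * lam) ≤ (x - mean θ j) ⬝ᵥ ((covm θ j)⁻¹ *ᵥ (x - mean θ j)) := by
        have h1 := rayleigh_inv hp (hposd j) (x - mean θ j)
        have h2 : ε^2 / (γ * lam) ≤ (lamMax (covm θ j))⁻¹ * ((x - mean θ j) ⬝ᵥ (x - mean θ j)) := by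
          have h3 : ε^2 / (γ * lam) ≤ ε^2 / lamMax (covm θ j) := by
            apply div_le_div_of_nonneg_left (sq_nonneg ε) hlmax_pos (hgl j)
          have h4 : ε^2 / lamMax (covm θ j) ≤ (lamMax (covm θ j))⁻¹ * ((x - mean θ j) ⬝ᵥ (x - mean θ j)) := by
            rw [div_eq_inv_mul]
            exact mul_le_mul_of_nonneg_left hv (inv_pos.mpr hlmax_pos).le
          linarith
        linarith
      have h := gauss_le hp (hposd j) hlam_pos (hlam_le j) x (mean θ j) hq
      calc gauss x (mean θ j) (covm θ j) ≤ Cp * lam ^ (-(p:ℝ)/2) * Real.exp (-(ε^2 / (γ * lam)) / 2) := h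
        _ = B := by rw [hBdef, hDdef, hedef]
    -- psi facts
    have hgauss_pos : ∀ (x : Fin p → ℝ) j, 0 < gauss x (mean θ j) (covm θ j) :=
      fun x j => gauss_pos (hposd j) x (mean θ j)
    have hsum_nonneg : ∀ x : Fin p → ℝ, 0 ≤ ∑ j, wt θ j * gauss x (mean θ j) (covm θ j) :=
      fun x => Finset.sum_nonneg fun j _ => mul_nonneg (hwt j) (hgauss_pos x j).le
    have hπ0δ_nonneg : 0 ≤ pi0 θ * δ := mul_nonneg hpi0 hδ.le
    have hψ_pos : ∀ x, 0 < psi δ θ x := by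
      intro x
      rcases lt_or_eq_of_le hpi0 with h | h
      · exact add_pos_of_pos_of_nonneg (mul_pos h hδ) (hsum_nonneg x)
      · have hsum1 : ∑ j, wt θ j = 1 := by rw [← hsum, ← h]; ring
        have hex : ∃ j, 0 < wt θ j := by
          by_contra hcon; push_neg at hcon
          have : ∑ j, wt θ j = 0 :=
            Finset.sum_eq_zero fun j _ => le_antisymm (hcon j) (hwt j)
          rw [this] at hsum1; norm_num at hsum1
        obtain ⟨j, hj⟩ := hex
        have h1 : 0 < wt θ j * gauss x (mean θ j) (covm θ j) := mul_pos hj (hgauss_pos x j)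
        have h2 : wt θ j * gauss x (mean θ j) (covm θ j)
            ≤ ∑ j', wt θ j' * gauss x (mean θ j') (covm θ j') :=
          Finset.single_le_sum (fun j' _ => mul_nonneg (hwt j') (hgauss_pos x j').le)
            (Finset.mem_univ j)
        unfold psi
        linarith
    have hπ0δ_le_ψ : ∀ x, pi0 θ * δ ≤ psi δ θ x := by
      intro x
      have := hsum_nonneg x
      unfold psi; linarith
    have hwt_sum_le : ∑ j, wt θ j ≤ 1 := by linarith
    have hψ_le_sum : ∀ (x : Fin p → ℝ) (M : ℝ), 0 ≤ M →
        (∀ j, gauss x (mean θ j) (covm θ j) ≤ M) → psi δ θ x ≤ pi0 θ * δ + M := by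
      intro x M hM hb
      unfold psi
      have h1 : ∑ j, wt θ j * gauss x (mean θ j) (covm θ j) ≤ ∑ j, wt θ j * M :=
        Finset.sum_le_sum fun j _ => mul_le_mul_of_nonneg_left (hb j) (hwt j)
      have h2 : ∑ j, wt θ j * M = (∑ j, wt θ j) * M := (Finset.sum_mul _ _ _).symm
      nlinarith [mul_le_mul_of_nonneg_right hwt_sum_le hM]
    -- measurability
    have hcont_quad : ∀ j, Continuous fun x : Fin p → ℝ =>
        ((x - mean θ j) ⬝ᵥ ((covm θ j)⁻¹ *ᵥ (x - mean θ j))) := by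
      intro j
      simp only [dotProduct, mulVec, Pi.sub_apply]
      fun_prop
    have hψ_cont : Continuous (psi δ θ) := by
      unfold psi gauss
      refine continuous_const.add (continuous_finset_sum _ fun j _ => Continuous.mul continuous_const ?_)
      exact Continuous.mul (Continuous.mul continuous_const continuous_const)
        (Real.continuous_exp.comp (((hcont_quad j).neg).div_const 2))
    have hA_meas : MeasurableSet A := by
      have hAeq : A = ⋂ j, (fun x : Fin p → ℝ => Real.sqrt (∑ i, (x i - mean θ j i) ^ 2)) ⁻¹' Set.Ici ε := by
        ext x; simp [hAdef, Set.mem_iInter]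
      rw [hAeq]
      refine MeasurableSet.iInter fun j => ?_
      refine (IsClosed.preimage ?_ isClosed_Ici).measurableSet
      have : Continuous fun x : Fin p → ℝ => ∑ i, (x i - mean θ j i) ^ 2 := by fun_prop
      exact Real.continuous_sqrt.comp this
    have hPA' : πmax + ε7 ≤ (P A).toReal := by
      rw [← ENNReal.ofReal_le_iff_le_toReal (measure_ne_top P A)]
      exact hPA
    -- noise constraint consequence
    have hπ0B_pos : 0 < pi0 θ * δ + B := add_pos_of_nonneg_of_pos hπ0δ_nonneg hB_pos
    have hg_cont : Continuous fun x => pi0 θ * δ / psi δ θ x :=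
      continuous_const.div hψ_cont fun x => (hψ_pos x).ne'
    have hg_nonneg : ∀ x, 0 ≤ pi0 θ * δ / psi δ θ x :=
      fun x => div_nonneg hπ0δ_nonneg (hψ_pos x).le
    have hg_int : Integrable (fun x => pi0 θ * δ / psi δ θ x) P := by
      refine Integrable.mono' (integrable_const 1) hg_cont.aestronglyMeasurable
        (ae_of_all _ fun x => ?_)
      rw [Real.norm_eq_abs, abs_of_nonneg (hg_nonneg x)]
      exact (div_le_one (hψ_pos x)).mpr (hπ0δ_le_ψ x)
    have hπ0δB : pi0 θ * δ ≤ πmax / ε7 * B := by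
      have hgA : ∀ x ∈ A, pi0 θ * δ / (pi0 θ * δ + B) ≤ pi0 θ * δ / psi δ θ x := by
        intro x hx
        apply div_le_div_of_nonneg_left hπ0δ_nonneg (hψ_pos x)
        exact hψ_le_sum x B hB_pos.le (hgauss_A x hx)
      have hstep : pi0 θ * δ / (pi0 θ * δ + B) * (P A).toReal ≤ πmax := by
        have h1 : ∫ x in A, (fun _ : Fin p → ℝ => pi0 θ * δ / (pi0 θ * δ + B)) x ∂P
            ≤ ∫ x in A, pi0 θ * δ / psi δ θ x ∂P :=
          setIntegral_mono_on (integrable_const _).integrableOn hg_int.integrableOn hA_meas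
            fun x hx => hgA x hx
        rw [setIntegral_const] at h1
        have h2 : ∫ x in A, pi0 θ * δ / psi δ θ x ∂P ≤ ∫ x, pi0 θ * δ / psi δ θ x ∂P :=
          setIntegral_le_integral hg_int (ae_of_all _ hg_nonneg)
        have h3 : pi0 θ * δ / (pi0 θ * δ + B) * (P A).toReal
            = (P A).toReal • (pi0 θ * δ / (pi0 θ * δ + B)) := by
          rw [smul_eq_mul]; ring
        rw [h3]
        exact le_trans h1 (le_trans h2 hnoise)
      have hm_nonneg : 0 ≤ pi0 θ * δ / (pi0 θ * δ + B) := div_nonneg hπ0δ_nonneg hπ0B_pos.le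
      have hstep2 : pi0 θ * δ / (pi0 θ * δ + B) * (πmax + ε7) ≤ πmax := by
        calc pi0 θ * δ / (pi0 θ * δ + B) * (πmax + ε7)
            ≤ pi0 θ * δ / (pi0 θ * δ + B) * (P A).toReal :=
              mul_le_mul_of_nonneg_left hPA' hm_nonneg
          _ ≤ πmax := hstep
      rw [div_mul_eq_mul_div, div_le_iff₀ hπ0B_pos] at hstep2
      rw [div_mul_eq_mul_div, le_div_iff₀ hε7]
      nlinarith
    -- pointwise log bounds
    have hψA2 : ∀ x ∈ A, psi δ θ x ≤ (1 + πmax / ε7) * B := by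
      intro x hx
      have := hψ_le_sum x B hB_pos.le (hgauss_A x hx)
      nlinarith
    have hψall2 : ∀ x, psi δ θ x ≤ (1 + πmax / ε7) * D := by
      intro x
      have h1 := hψ_le_sum x D hD_pos.le (hgauss_all x)
      have h2 : pi0 θ * δ ≤ πmax / ε7 * D := by
        have : πmax / ε7 * B ≤ πmax / ε7 * D :=
          mul_le_mul_of_nonneg_left hB_le_D (by positivity)
        linarith
      nlinarith
    have hlogD : Real.log ((1 + πmax / ε7) * D)
        = Real.log (1 + πmax / ε7) + Real.log Cp + (-(p:ℝ)/2) * Real.log lam := by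
      rw [hDdef, Real.log_mul hK_pos.ne' (by positivity),
        Real.log_mul hCp_pos.ne' (Real.rpow_pos_of_pos hlam_pos _).ne',
        Real.log_rpow hlam_pos]
      ring
    have hlog_all : ∀ x, Real.log (psi δ θ x)
        ≤ Real.log (1 + πmax / ε7) + Real.log Cp + (-(p:ℝ)/2) * Real.log lam := by
      intro x
      rw [← hlogD]
      exact Real.log_le_log (hψ_pos x) (hψall2 x)
    have hlog_A : ∀ x ∈ A, Real.log (psi δ θ x)
        ≤ Real.log (1 + πmax / ε7) + Real.log Cp + (-(p:ℝ)/2) * Real.log lam + e := by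
      intro x hx
      have h1 : Real.log (psi δ θ x) ≤ Real.log ((1 + πmax / ε7) * B) :=
        Real.log_le_log (hψ_pos x) (hψA2 x hx)
      have h2 : Real.log ((1 + πmax / ε7) * B)
          = Real.log ((1 + πmax / ε7) * D) + e := by
        rw [hBdef, ← mul_assoc, Real.log_mul (by positivity) (Real.exp_pos _).ne',
          Real.log_exp]
      rw [h2, hlogD] at h1
      exact h1
    -- integral split
    set u : ℝ := Real.log (1 + πmax / ε7) + Real.log Cp + (-(p:ℝ)/2) * Real.log lam with hudef
    have hsplit : ∫ x, Real.log (psi δ θ x) ∂P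
        = (∫ x in A, Real.log (psi δ θ x) ∂P) + ∫ x in Aᶜ, Real.log (psi δ θ x) ∂P :=
      (integral_add_compl hA_meas hint).symm
    have hIA : ∫ x in A, Real.log (psi δ θ x) ∂P ≤ (P A).toReal * (u + e) := by
      have h1 : ∫ x in A, Real.log (psi δ θ x) ∂P ≤ ∫ _x in A, (u + e) ∂P :=
        setIntegral_mono_on hint.integrableOn (integrable_const _).integrableOn hA_meas
          fun x hx => hlog_A x hx
      rwa [setIntegral_const, smul_eq_mul] at h1
    have hIAc : ∫ x in Aᶜ, Real.log (psi δ θ x) ∂P ≤ (P Aᶜ).toReal * u := by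
      have h1 : ∫ x in Aᶜ, Real.log (psi δ θ x) ∂P ≤ ∫ _x in Aᶜ, u ∂P :=
        setIntegral_mono_on hint.integrableOn (integrable_const _).integrableOn
          hA_meas.compl fun x _ => hlog_all x
      rwa [setIntegral_const, smul_eq_mul] at h1
    have hProb : (P A).toReal + (P Aᶜ).toReal = 1 := by
      have h := measure_add_measure_compl (μ := P) hA_meas
      have h2 := congrArg ENNReal.toReal h
      rwa [ENNReal.toReal_add (measure_ne_top P A) (measure_ne_top P Aᶜ),
        measure_univ, ENNReal.toReal_one] at h2
    have hfinal : LL P δ θ ≤ u + (πmax + ε7) * e := by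
      have h1 : LL P δ θ ≤ (P A).toReal * (u + e) + (P Aᶜ).toReal * u := by
        unfold LL; rw [hsplit]; exact add_le_add hIA hIAc
      have h2 : (P A).toReal * (u + e) + (P Aᶜ).toReal * u = u + (P A).toReal * e := by
        linear_combination u * hProb
      have h3 : (P A).toReal * e ≤ (πmax + ε7) * e :=
        mul_le_mul_of_nonpos_right hPA' he_neg.le
      linarith
    have heq : u + (πmax + ε7) * e
        = -((πmax + ε7) * ε^2 / (2*γ)) / lam - (p:ℝ)/2 * Real.log lam
          + (Real.log (1 + πmax / ε7) + Real.log Cp) := by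
      rw [hudef, hedef]
      field_simp
      ring
    rw [heq] at hfinal
    exact hfinal
  refine ⟨(πmax + ε7) * ε^2 / (2*γ), hc7, (p:ℝ)/2, hc8,
    Real.log (1 + πmax / ε7) + Real.log ((2*π) ^ (-(p:ℝ)/2)), key, ?_⟩
  intro θseq hmemA hlam0
  have hposm : ∀ m, 0 < lamMinP (θseq m) := fun m =>
    hlamP_pos (θseq m) (hmemA m).1.1.2.2.2.1
  have hbd : ∀ m, LL P δ (θseq m)
      ≤ -((πmax + ε7) * ε^2 / (2*γ)) / lamMinP (θseq m)
        - (p:ℝ)/2 * Real.log (lamMinP (θseq m))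
        + (Real.log (1 + πmax / ε7) + Real.log ((2*π) ^ (-(p:ℝ)/2))) :=
    fun m => key (θseq m) (hmemA m).1 (hmemA m).2
  have hlseq : Tendsto (fun m => lamMinP (θseq m)) atTop (𝓝[>] (0:ℝ)) :=
    tendsto_nhdsWithin_of_tendsto_nhds_of_eventually_within _ hlam0
      (Eventually.of_forall fun m => hposm m)
  have hg : Tendsto (fun t : ℝ =>
      -((πmax + ε7) * ε^2 / (2*γ)) / t - (p:ℝ)/2 * Real.log t
        + (Real.log (1 + πmax / ε7) + Real.log ((2*π) ^ (-(p:ℝ)/2))))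
      (𝓝[>] (0:ℝ)) atBot := by
    have h1 : Tendsto (fun t : ℝ => Real.log t * t ^ (1:ℝ)) (𝓝[>] (0:ℝ)) (𝓝 0) :=
      tendsto_log_mul_rpow_nhdsGT_zero one_pos
    have h1' : Tendsto (fun t : ℝ => Real.log t * t) (𝓝[>] (0:ℝ)) (𝓝 0) := by
      refine h1.congr fun t => by rw [Real.rpow_one]
    have h2 : Tendsto (fun t : ℝ =>
        (πmax + ε7) * ε^2 / (2*γ) + (p:ℝ)/2 * (Real.log t * t)) (𝓝[>] (0:ℝ))
        (𝓝 ((πmax + ε7) * ε^2 / (2*γ))) := by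
      have := tendsto_const_nhds (f := 𝓝[>] (0:ℝ)) (x := (πmax + ε7) * ε^2 / (2*γ))
      have h3 := (h1'.const_mul ((p:ℝ)/2))
      have h4 := this.add h3
      simpa using h4
    have h5 : Tendsto (fun t : ℝ =>
        t⁻¹ * ((πmax + ε7) * ε^2 / (2*γ) + (p:ℝ)/2 * (Real.log t * t))) (𝓝[>] (0:ℝ)) atTop :=
      Filter.Tendsto.atTop_mul_pos hc7 tendsto_inv_nhdsGT_zero h2
    have h6 : Tendsto (fun t : ℝ =>
        -(t⁻¹ * ((πmax + ε7) * ε^2 / (2*γ) + (p:ℝ)/2 * (Real.log t * t)))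
          + (Real.log (1 + πmax / ε7) + Real.log ((2*π) ^ (-(p:ℝ)/2)))) (𝓝[>] (0:ℝ)) atBot := by
      apply tendsto_atBot_add_const_right
      exact tendsto_neg_atTop_atBot.comp h5
    refine h6.congr' ?_
    filter_upwards [self_mem_nhdsWithin] with t (ht : (0:ℝ) < t)
    have htne : t ≠ 0 := ht.ne'
    field_simp
    ring
  exact tendsto_atBot_mono hbd (hg.comp hlseq)
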